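/- Suppose x_p ∈ {0,1} for every leaf l and every p ∈ DP_l, and ρ_{j,a} ∈ {0,1} for every internal node j and every a ∈ S_j, and that constraints (alpha) and (gamma) hold. Then for EVERY feature vector v : F → ℝ (not only the rows of a predetermined dataset), ∑_{leaves l} ∑_{p ∈ DP_l such that v follows p} x_p = 1. Hence the data-dependent cuts generated for unlabeled rows are valid for all binary feasible solutions of the master problem. -/

import Mathlib

open Finset

attribute [local instance] Classical.propDecidable

/-- The decision paths for a leaf `l` (a Boolean string of length `k`) of the complete
binary tree of depth `k`: a split check, belonging to the candidate set `S j` of the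
corresponding node `j = l.take i`, for every depth `i < k`, together with a target in `T`.
The split check assigned by `p` at the node `l.take i` is `p.1 i`. -/
noncomputable def DP {F T : Type} [Fintype T] (k : ℕ) (S : List Bool → Finset (F × ℝ))
    (l : List Bool) : Finset ((Fin k → F × ℝ) × T) :=
  (Fintype.piFinset fun i : Fin k => S (l.take i.1)) ×ˢ (Finset.univ : Finset T)

/-- The leaves of the complete binary tree of depth `k`: Boolean strings of length `k`. -/
noncomputable def Leaves (k : ℕ) : Finset (List Bool) :=
  (Finset.univ : Finset (Fin k → Bool)).image List.ofFn

/-- A feature vector `v` follows a decision path `p` for leaf `l`: at every depth `i < k`,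
`v` takes the left branch on the split check `p.1 i` (i.e. `v (p.1 i).1 ≤ (p.1 i).2`)
iff the bit of `l` following the node `l.take i` is `false` (i.e. that node is a left
child on the path to `l`). -/
def Follows {F T : Type} (k : ℕ) (v : F → ℝ) (l : List Bool)
    (p : (Fin k → F × ℝ) × T) : Prop :=
  ∀ i : Fin k, (v (p.1 i).1 ≤ (p.1 i).2 ↔ l.getD i.1 false = false)

lemma sum_support_one {α : Type*} (s : Finset α) (f : α → ℝ)
    (hbin : ∀ p ∈ s, f p = 0 ∨ f p = 1) (hsum : ∑ p ∈ s, f p = 1) :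
    ∃ p ∈ s, f p = 1 ∧ ∀ q ∈ s, q ≠ p → f q = 0 := by
  have hne : ∃ p ∈ s, f p ≠ 0 := by
    by_contra h
    push_neg at h
    rw [Finset.sum_eq_zero h] at hsum
    norm_num at hsum
  obtain ⟨p, hp, hp0⟩ := hne
  have hp1 : f p = 1 := (hbin p hp).resolve_left hp0
  refine ⟨p, hp, hp1, ?_⟩
  have hz : ∑ q ∈ s.erase p, f q = 0 := by
    have := Finset.add_sum_erase s f hp
    rw [← this, hp1] at hsum
    linarith
  intro q hq hqp
  exact (Finset.sum_eq_zero_iff_of_nonneg (fun r hr => by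
    rcases hbin r (Finset.mem_of_mem_erase hr) with h | h <;> simp [h])).mp hz q
    (Finset.mem_erase.mpr ⟨hqp, hq⟩)

lemma mem_DP_iff {F T : Type} [Fintype T] (k : ℕ) (S : List Bool → Finset (F × ℝ))
    (l : List Bool) (p : (Fin k → F × ℝ) × T) :
    p ∈ DP k S l ↔ ∀ i : Fin k, p.1 i ∈ S (l.take i.1) := by
  simp [DP, Finset.mem_product, Fintype.mem_piFinset]

lemma mem_Leaves_iff (k : ℕ) (l : List Bool) : l ∈ Leaves k ↔ l.length = k := by
  simp only [Leaves, Finset.mem_image, Finset.mem_univ, true_and]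
  constructor
  · rintro ⟨f, rfl⟩; simp
  · rintro rfl
    exact ⟨fun i => l.get ⟨i, i.2⟩, by simp [List.ofFn_get]⟩

theorem stmt12 {F T : Type} [Fintype F] [Nonempty F] [Fintype T] [Nonempty T]
    (k : ℕ) (hk : 1 ≤ k)
    (S : List Bool → Finset (F × ℝ))
    (hS : ∀ j : List Bool, j.length < k → (S j).Nonempty)
    (x : List Bool → (Fin k → F × ℝ) × T → ℝ)
    (ρ : List Bool → F × ℝ → ℝ)
    -- x and ρ are binary
    (hxbin : ∀ l : List Bool, l.length = k → ∀ p ∈ DP k S l, x l p = 0 ∨ x l p = 1)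
    (hρbin : ∀ j : List Bool, j.length < k → ∀ a ∈ S j, ρ j a = 0 ∨ ρ j a = 1)
    -- constraints (alpha)
    (halpha : ∀ l : List Bool, l.length = k → ∑ p ∈ DP k S l, x l p = 1)
    -- constraints (gamma)
    (hgamma : ∀ l : List Bool, l.length = k → ∀ i : Fin k, ∀ a ∈ S (l.take i.1),
      ∑ p ∈ DP k S l, (if p.1 i = a then x l p else 0) = ρ (l.take i.1) a) :
    ∀ v : F → ℝ, ∑ l ∈ Leaves k, ∑ p ∈ DP k S l,
      (if Follows k v l p then x l p else 0) = 1 := by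
  intro v
  classical
  -- choose the unique support path of each leaf
  have hex : ∀ l : List Bool, l.length = k →
      ∃ p, p ∈ DP k S l ∧ x l p = 1 ∧ ∀ q ∈ DP k S l, q ≠ p → x l q = 0 := by
    intro l hl
    obtain ⟨p, hp, h1, h0⟩ := sum_support_one (DP k S l) (x l) (hxbin l hl) (halpha l hl)
    exact ⟨p, hp, h1, h0⟩
  choose! P hPmem hP1 hP0 using hex
  -- the value of ρ at the support path's split check is 1
  have hval : ∀ l : List Bool, ∀ hl : l.length = k, ∀ i : Fin k,
      ρ (l.take i.1) ((P l).1 i) = 1 := by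
    intro l hl i
    have ha : (P l).1 i ∈ S (l.take i.1) := (mem_DP_iff k S l (P l)).mp (hPmem l hl) i
    rw [← hgamma l hl i _ ha]
    rw [Finset.sum_eq_single_of_mem (P l) (hPmem l hl)]
    · rw [if_pos rfl, hP1 l hl]
    · intro q hq hqP
      split_ifs with h
      · exact hP0 l hl q hq hqP
      · rfl
  -- consistency of split checks along common prefixes
  have hcons : ∀ l l' : List Bool, l.length = k → l'.length = k → ∀ i : Fin k,
      l.take i.1 = l'.take i.1 → (P l).1 i = (P l').1 i := by
    intro l l' hl hl' i htake
    by_contra hne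
    have ha : (P l).1 i ∈ S (l'.take i.1) := by
      rw [← htake]; exact (mem_DP_iff k S l (P l)).mp (hPmem l hl) i
    have h1 : ρ (l'.take i.1) ((P l).1 i) = 1 := by
      rw [← htake, hval l hl i]
    have h0 : ρ (l'.take i.1) ((P l).1 i) = 0 := by
      rw [← hgamma l' hl' i _ ha]
      rw [Finset.sum_eq_single_of_mem (P l') (hPmem l' hl')]
      · rw [if_neg (fun h => hne h.symm)]
      · intro q hq hqP
        split_ifs with h
        · exact hP0 l' hl' q hq hqP
        · rfl
    rw [h1] at h0
    norm_num at h0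
  -- total split-check function at a node (via an arbitrary extension to a leaf)
  set A : List Bool → F × ℝ := fun j =>
    (P (j ++ List.replicate (k - j.length) false)).1 ⟨min j.length (k - 1), by omega⟩ with hA
  have hkey : ∀ l : List Bool, ∀ hl : l.length = k, ∀ i : Fin k,
      (P l).1 i = A (l.take i.1) := by
    intro l hl i
    have hlen : (l.take i.1).length = i.1 := by
      rw [List.length_take, hl]
      omega
    have hElen : (l.take i.1 ++ List.replicate (k - (l.take i.1).length) false).length = k := by
      rw [List.length_append, List.length_replicate, hlen]
      omega
    have hidx : (⟨min (l.take i.1).length (k - 1), by omega⟩ : Fin k) = i := by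
      apply Fin.ext
      simp [hlen]
      omega
    rw [hA]
    simp only
    rw [hidx]
    apply hcons l _ hl hElen i
    exact (List.take_left' hlen).symm
  -- the leaf followed by `v`, built bit by bit
  set step : List Bool → Bool := fun j => !decide (v (A j).1 ≤ (A j).2) with hstep
  set g : ℕ → List Bool := fun n => Nat.rec [] (fun _ ih => ih ++ [step ih]) n with hg
  have hgsucc : ∀ n, g (n + 1) = g n ++ [step (g n)] := fun n => rfl
  have hglen : ∀ n, (g n).length = n := by
    intro n
    induction n with
    | zero => rfl
    | succ n ih => rw [hgsucc]; simp [ih]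
  have hgtake : ∀ m n, n ≤ m → (g m).take n = g n := by
    intro m
    induction m with
    | zero => intro n hn; interval_cases n; rfl
    | succ m ih =>
      intro n hn
      rcases Nat.lt_or_ge n (m + 1) with h | h
      · rw [hgsucc, List.take_append_of_le_length (by rw [hglen]; omega)]
        exact ih n (by omega)
      · have : n = m + 1 := by omega
        subst this
        exact List.take_of_length_le (le_of_eq (hglen (m + 1)))
  have hbit : ∀ n m, n < m → (g m).getD n false = step (g n) := by
    intro n m
    induction m with
    | zero => omega
    | succ m ih =>
      intro hn
      rcases Nat.lt_or_ge n m with h | h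
      · rw [hgsucc, List.getD, List.getElem?_append_left (by rw [hglen]; omega)]
        exact ih h
      · have : n = m := by omega
        subst this
        rw [hgsucc]
        have hc := List.getElem?_concat_length (l := g n) (a := step (g n)) 
        rw [hglen n] at hc
        rw [List.getD, hc]
        rfl
  have hgk : (g k).length = k := hglen k
  -- `v` follows the support path of `g k`
  have hFol : Follows k v (g k) (P (g k)) := by
    intro i
    rw [hkey (g k) hgk i, hgtake k i.1 (le_of_lt i.2), hbit i.1 k i.2, hstep]
    simp
  -- `v` does not follow the support path of any other leaf
  have hNFol : ∀ l : List Bool, l.length = k → l ≠ g k → ¬ Follows k v l (P l) := by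
    intro l hl hne hF
    apply hne
    have key : ∀ n, n ≤ k → l.take n = g n := by
      intro n
      induction n with
      | zero => intro _; rfl
      | succ n ih =>
        intro hn
        have ihn := ih (by omega)
        have hbitl : l.getD n false = step (g n) := by
          have hi : n < k := by omega
          have hiff := hF ⟨n, hi⟩
          rw [hkey l hl ⟨n, hi⟩] at hiff
          simp only at hiff
          rw [ihn] at hiff
          by_cases hle : v (A (g n)).1 ≤ (A (g n)).2
          · rw [hiff.mp hle, hstep]
            simp [hle]
          · have h1 : l.getD n false = true := by
              rcases hld : l.getD n false with _ | _
              · exact absurd (hiff.mpr hld) hle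
              · rfl
            rw [h1, hstep]
            simp [hle]
        calc l.take (n + 1) = l.take n ++ (l[n]?).toList := List.take_succ
          _ = g n ++ [step (g n)] := by
              rw [ihn]
              congr 1
              have hn' : n < l.length := by omega
              rw [List.getElem?_eq_getElem hn',
                ← List.getD_eq_getElem l false hn', hbitl]
              rfl
          _ = g (n + 1) := (hgsucc n).symm
    have h1 : l.take k = l := List.take_of_length_le (by omega)
    rw [← h1, key k le_rfl]
  -- conclude
  rw [Finset.sum_eq_single_of_mem (g k) ((mem_Leaves_iff k (g k)).mpr hgk)]
  · rw [Finset.sum_eq_single_of_mem (P (g k)) (hPmem (g k) hgk)]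
    · rw [if_pos hFol, hP1 (g k) hgk]
    · intro q hq hqP
      split_ifs with h
      · exact hP0 (g k) hgk q hq hqP
      · rfl
  · intro l hl hlne
    have hlk : l.length = k := (mem_Leaves_iff k l).mp hl
    apply Finset.sum_eq_zero
    intro p hp
    by_cases hpP : p = P l
    · subst hpP
      rw [if_neg (hNFol l hlk hlne)]
    · split_ifs with h
      · exact hP0 l hlk p hp hpP
      · rfl
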